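/- There exists a universal constant C > 0 such that the following holds. Let y^1,…,y^m ∈ [0,1]^d, let σ be a uniformly random permutation of {1,…,m}, and set Y^j := y^{σ(j)}. Fix a coordinate i ∈ {1,…,d}, let μ_i := (1/m)·Σ_{t=1}^m y^t_i, and let ε ∈ (0,1] and δ ∈ (0,1]. Then with probability at least 1 − δ/d, simultaneously for all j ≤ m/2: E[ Y^j_i | Y^1,…,Y^{j−1} ] ≤ (1+2ε)·μ_i + C·log(d/δ)/(m·ε). -/

import Mathlib

open MeasureTheory Finset
open scoped Classical

/-- Discrete σ-algebra on the permutation group. -/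
instance (m : ℕ) : MeasurableSpace (Equiv.Perm (Fin m)) := ⊤

/-- Uniform probability measure on the permutations of `Fin m`. -/
noncomputable def permUniform (m : ℕ) : Measure (Equiv.Perm (Fin m)) :=
  (PMF.uniformOfFintype (Equiv.Perm (Fin m))).toMeasure

namespace S12

instance (m : ℕ) : MeasurableSingletonClass (Equiv.Perm (Fin m)) := ⟨fun _ => trivial⟩

instance (m : ℕ) [NeZero m] : IsProbabilityMeasure (permUniform m) :=
  PMF.toMeasure.isProbabilityMeasure _

variable {m d : ℕ}

lemma permUniform_singleton [NeZero m] (σ : Equiv.Perm (Fin m)) :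
    permUniform m {σ} = (Fintype.card (Equiv.Perm (Fin m)) : ENNReal)⁻¹ := by
  rw [permUniform, PMF.toMeasure_apply_singleton _ _ (measurableSet_singleton σ),
    PMF.uniformOfFintype_apply]

lemma eq_of_ae [NeZero m] {f g : Equiv.Perm (Fin m) → ℝ}
    (h : f =ᵐ[permUniform m] g) : f = g := by
  funext σ
  by_contra hne
  have h1 : permUniform m {x | f x ≠ g x} = 0 := h
  have h2 : permUniform m {σ} ≤ permUniform m {x | f x ≠ g x} :=
    measure_mono (by simpa using hne)
  rw [permUniform_singleton, h1] at h2
  simp at h2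

lemma permUniform_finset [NeZero m] (s : Finset (Equiv.Perm (Fin m))) :
    permUniform m s = s.card * (Fintype.card (Equiv.Perm (Fin m)) : ENNReal)⁻¹ := by
  rw [permUniform, PMF.toMeasure_apply_finset]
  simp [PMF.uniformOfFintype_apply, mul_comm]

def tailP (m j : ℕ) : Finset (Fin m) := univ.filter (fun p => j ≤ p.val)

lemma mem_tailP {j : ℕ} {p : Fin m} : p ∈ tailP m j ↔ j ≤ p.val := by simp [tailP]

lemma sum_mulRight (e : Equiv.Perm (Fin m)) (f : Equiv.Perm (Fin m) → ℝ) :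
    ∑ σ : Equiv.Perm (Fin m), f (σ * e) = ∑ σ : Equiv.Perm (Fin m), f σ :=
  Fintype.sum_equiv (Equiv.mulRight e) _ _ (fun _ => rfl)

lemma tailP_eq_insert {t : ℕ} (ht : t < m) :
    tailP m t = insert (⟨t, ht⟩ : Fin m) (tailP m (t + 1)) := by
  ext p; simp only [mem_tailP, Finset.mem_insert, Fin.ext_iff]; omega

lemma self_not_mem_tailP {t : ℕ} (ht : t < m) : (⟨t, ht⟩ : Fin m) ∉ tailP m (t + 1) := by
  simp [mem_tailP]

variable (a : Fin m → ℝ)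

lemma tail_step {t : ℕ} (ht : t < m) (ha : ∀ u, 0 ≤ a u) :
    (m : ℝ) * ∑ σ : Equiv.Perm (Fin m), ∏ p ∈ tailP m t, a (σ p)
      ≤ (∑ u, a u) * ∑ σ : Equiv.Perm (Fin m), ∏ p ∈ tailP m (t + 1), a (σ p) := by
  set pt : Fin m := ⟨t, ht⟩ with hpt
  have hGt : ∑ σ : Equiv.Perm (Fin m), ∏ p ∈ tailP m t, a (σ p)
      = ∑ σ : Equiv.Perm (Fin m), a (σ pt) * ∏ p ∈ tailP m (t + 1), a (σ p) :=
    Finset.sum_congr rfl fun σ _ => by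
      rw [tailP_eq_insert ht, Finset.prod_insert (self_not_mem_tailP ht)]
  have hRHS : (∑ u, a u) * ∑ σ : Equiv.Perm (Fin m), ∏ p ∈ tailP m (t + 1), a (σ p)
      = ∑ q : Fin m, ∑ σ : Equiv.Perm (Fin m),
          a (σ q) * ∏ p ∈ tailP m (t + 1), a (σ p) := by
    rw [Finset.mul_sum]
    have : ∀ σ : Equiv.Perm (Fin m),
        (∑ u, a u) * ∏ p ∈ tailP m (t + 1), a (σ p)
          = ∑ q : Fin m, a (σ q) * ∏ p ∈ tailP m (t + 1), a (σ p) := by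
      intro σ
      rw [← Finset.sum_mul, Equiv.sum_comp σ a]
    simp_rw [this]
    rw [Finset.sum_comm]
  have key : ∀ q : Fin m,
      (∑ σ : Equiv.Perm (Fin m), a (σ pt) * ∏ p ∈ tailP m (t + 1), a (σ p))
        ≤ ∑ σ : Equiv.Perm (Fin m), a (σ q) * ∏ p ∈ tailP m (t + 1), a (σ p) := by
    intro q
    by_cases hq : t + 1 ≤ q.val
    · -- q is inside the tail: diagonal case, AM-GM
      have hqmem : q ∈ tailP m (t + 1) := mem_tailP.2 hq
      have hptv : pt.val = t := rfl
      have hqpt : q ≠ pt := by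
        intro hh; rw [hh] at hq; rw [hptv] at hq; omega
      set e := Equiv.swap q pt with he
      have hfix : ∀ p ∈ (tailP m (t + 1)).erase q, e p = p := by
        intro p hp
        rcases Finset.mem_erase.1 hp with ⟨hpq, hpmem⟩
        have hppt : p ≠ pt := by
          have hpv := mem_tailP.1 hpmem
          intro hh; rw [hh, hptv] at hpv; omega
        exact Equiv.swap_apply_of_ne_of_ne hpq hppt
    -- expand the q-factor out of the product
      have hsplit : ∀ (τ : Equiv.Perm (Fin m)) (x : Fin m),
          (∏ p ∈ tailP m (t + 1), a (τ p))
            = a (τ q) * ∏ p ∈ (tailP m (t + 1)).erase q, a (τ p) :=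
        fun τ x => (Finset.mul_prod_erase _ _ hqmem).symm
      have hT2 : ∑ σ : Equiv.Perm (Fin m), a (σ q) * ∏ p ∈ tailP m (t + 1), a (σ p)
          = ∑ σ : Equiv.Perm (Fin m),
              a (σ pt) * (a (σ pt) * ∏ p ∈ (tailP m (t + 1)).erase q, a (σ p)) := by
        rw [← sum_mulRight e (fun σ => a (σ q) * ∏ p ∈ tailP m (t + 1), a (σ p))]
        refine Finset.sum_congr rfl fun σ _ => ?_
        have h1 : (σ * e) q = σ pt := by
          simp [he, Equiv.Perm.mul_apply, Equiv.swap_apply_left]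
        have h2 : ∏ p ∈ tailP m (t + 1), a ((σ * e) p)
            = a (σ pt) * ∏ p ∈ (tailP m (t + 1)).erase q, a (σ p) := by
          rw [hsplit (σ * e) q, h1]
          congr 1
          refine Finset.prod_congr rfl fun p hp => ?_
          rw [Equiv.Perm.mul_apply, hfix p hp]
        rw [h1, h2]
      have hT1 : ∑ σ : Equiv.Perm (Fin m), a (σ q) * ∏ p ∈ tailP m (t + 1), a (σ p)
          = ∑ σ : Equiv.Perm (Fin m),
              a (σ q) * (a (σ q) * ∏ p ∈ (tailP m (t + 1)).erase q, a (σ p)) :=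
        Finset.sum_congr rfl fun σ _ => by rw [hsplit σ q]
      have hG : ∑ σ : Equiv.Perm (Fin m), a (σ pt) * ∏ p ∈ tailP m (t + 1), a (σ p)
          = ∑ σ : Equiv.Perm (Fin m),
              a (σ pt) * (a (σ q) * ∏ p ∈ (tailP m (t + 1)).erase q, a (σ p)) :=
        Finset.sum_congr rfl fun σ _ => by rw [hsplit σ q]
      have hineq : ∀ σ : Equiv.Perm (Fin m),
          2 * (a (σ pt) * (a (σ q) * ∏ p ∈ (tailP m (t + 1)).erase q, a (σ p)))
            ≤ a (σ q) * (a (σ q) * ∏ p ∈ (tailP m (t + 1)).erase q, a (σ p))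
              + a (σ pt) * (a (σ pt) * ∏ p ∈ (tailP m (t + 1)).erase q, a (σ p)) := by
        intro σ
        have hProd : (0 : ℝ) ≤ ∏ p ∈ (tailP m (t + 1)).erase q, a (σ p) :=
          Finset.prod_nonneg fun p _ => ha _
        have h2ab : 2 * (a (σ pt) * a (σ q)) ≤ a (σ q) ^ 2 + a (σ pt) ^ 2 := by
          nlinarith [sq_nonneg (a (σ q) - a (σ pt))]
        nlinarith [mul_le_mul_of_nonneg_right h2ab hProd]
      have := Finset.sum_le_sum (fun σ (_ : σ ∈ (univ : Finset (Equiv.Perm (Fin m)))) => hineq σ)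
      rw [Finset.sum_add_distrib, ← hT1, ← hT2, ← Finset.mul_sum, ← hG] at this
      linarith
    · -- q before the tail: swap gives equality
      have hptv : pt.val = t := rfl
      set e := Equiv.swap q pt with he
      have : ∑ σ : Equiv.Perm (Fin m), a (σ q) * ∏ p ∈ tailP m (t + 1), a (σ p)
          = ∑ σ : Equiv.Perm (Fin m), a (σ pt) * ∏ p ∈ tailP m (t + 1), a (σ p) := by
        rw [← sum_mulRight e (fun σ => a (σ q) * ∏ p ∈ tailP m (t + 1), a (σ p))]
        refine Finset.sum_congr rfl fun σ _ => ?_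
        have h1 : (σ * e) q = σ pt := by
          simp [he, Equiv.Perm.mul_apply, Equiv.swap_apply_left]
        have h2 : ∀ p ∈ tailP m (t + 1), (σ * e) p = σ p := by
          intro p hp
          have hpv := mem_tailP.1 hp
          have hpq : p ≠ q := by
            intro hh; rw [hh] at hpv; omega
          have hppt : p ≠ pt := by
            intro hh; rw [hh, hptv] at hpv; omega
          rw [Equiv.Perm.mul_apply, Equiv.swap_apply_of_ne_of_ne hpq hppt]
        rw [h1]
        congr 1
        exact Finset.prod_congr rfl fun p hp => by rw [h2 p hp]
      rw [this]
  calc (m : ℝ) * ∑ σ : Equiv.Perm (Fin m), ∏ p ∈ tailP m t, a (σ p)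
      = ∑ _q : Fin m, ∑ σ : Equiv.Perm (Fin m),
          a (σ pt) * ∏ p ∈ tailP m (t + 1), a (σ p) := by
        rw [hGt, Finset.sum_const, Finset.card_univ, Fintype.card_fin, nsmul_eq_mul]
    _ ≤ ∑ q : Fin m, ∑ σ : Equiv.Perm (Fin m),
          a (σ q) * ∏ p ∈ tailP m (t + 1), a (σ p) :=
        Finset.sum_le_sum fun q _ => key q
    _ = _ := hRHS.symm


lemma card_tailP (j : ℕ) : (tailP m j).card = m - j := by
  rcases lt_or_ge j m with hj | hj
  · have : tailP m j = Finset.Ici (⟨j, hj⟩ : Fin m) := by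
      ext p; simp [tailP, Fin.le_def]
    rw [this, Fin.card_Ici]
  · have : tailP m j = ∅ := by
      ext p; simp only [mem_tailP, Finset.notMem_empty, iff_false, not_le]
      exact lt_of_lt_of_le p.isLt hj
    rw [this]; simp; omega




lemma tail_prod_le (hm : 0 < m) (ha : ∀ u, 0 ≤ a u) :
    ∀ (k t : ℕ), t + k = m →
    ∑ σ : Equiv.Perm (Fin m), ∏ p ∈ tailP m t, a (σ p)
      ≤ ((∑ u, a u) / m) ^ k * (Fintype.card (Equiv.Perm (Fin m)) : ℝ) := by
  have hm' : (0:ℝ) < m := by exact_mod_cast hm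
  have hsum : (0:ℝ) ≤ ∑ u, a u := Finset.sum_nonneg fun u _ => ha u
  intro k
  induction k with
  | zero =>
    intro t htm
    have hempty : tailP m t = ∅ := by
      ext p; simp only [mem_tailP, Finset.notMem_empty, iff_false, not_le]; omega
    simp [hempty]
  | succ k ih =>
    intro t htm
    have ht : t < m := by omega
    have h1 := tail_step a ht ha
    have h2 := ih (t + 1) (by omega)
    have hG1nn : (0:ℝ) ≤ ∑ σ : Equiv.Perm (Fin m), ∏ p ∈ tailP m (t+1), a (σ p) :=
      Finset.sum_nonneg fun σ _ => Finset.prod_nonneg fun p _ => ha _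
    have step : ∑ σ : Equiv.Perm (Fin m), ∏ p ∈ tailP m t, a (σ p)
        ≤ ((∑ u, a u) / m) * ∑ σ : Equiv.Perm (Fin m), ∏ p ∈ tailP m (t+1), a (σ p) := by
      rw [div_mul_eq_mul_div, le_div_iff₀ hm']
      linarith
    calc ∑ σ : Equiv.Perm (Fin m), ∏ p ∈ tailP m t, a (σ p)
        ≤ ((∑ u, a u) / m) * ∑ σ : Equiv.Perm (Fin m), ∏ p ∈ tailP m (t+1), a (σ p) := step
      _ ≤ ((∑ u, a u) / m) * (((∑ u, a u) / m) ^ k * (Fintype.card (Equiv.Perm (Fin m)) : ℝ)) :=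
          mul_le_mul_of_nonneg_left h2 (div_nonneg hsum hm'.le)
      _ = ((∑ u, a u) / m) ^ (k+1) * (Fintype.card (Equiv.Perm (Fin m)) : ℝ) := by ring

lemma card_mul_exp_avg_le {α : Type*} (s : Finset α) (hs : s.Nonempty) (f : α → ℝ) :
    (s.card : ℝ) * Real.exp ((∑ x ∈ s, f x) / s.card) ≤ ∑ x ∈ s, Real.exp (f x) := by
  have hcard : (0:ℝ) < s.card := by exact_mod_cast Finset.card_pos.2 hs
  have h := convexOn_exp.map_sum_le (t := s) (w := fun _ => (s.card : ℝ)⁻¹) (p := f)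
    (fun _ _ => by positivity) (by
      rw [Finset.sum_const, nsmul_eq_mul]
      field_simp) (fun _ _ => Set.mem_univ _)
  have h1 : (∑ x ∈ s, f x) / s.card = ∑ x ∈ s, (s.card : ℝ)⁻¹ • f x := by
    rw [← Finset.smul_sum]; simp [div_eq_inv_mul]
  rw [h1]
  calc (s.card : ℝ) * Real.exp (∑ x ∈ s, (s.card : ℝ)⁻¹ • f x)
      ≤ (s.card : ℝ) * ∑ x ∈ s, (s.card : ℝ)⁻¹ • Real.exp (f x) :=
        mul_le_mul_of_nonneg_left h hcard.le
    _ = ∑ x ∈ s, Real.exp (f x) := by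
        rw [← Finset.smul_sum, smul_eq_mul, ← mul_assoc, mul_inv_cancel₀ hcard.ne', one_mul]


variable (y : Fin m → Fin d → ℝ) (i : Fin d)

/-- first `j` observed rows -/
def proj (j : ℕ) (hj : j ≤ m) : Equiv.Perm (Fin m) → (Fin j → Fin d → ℝ) :=
  fun σ t => y (σ (Fin.castLE hj t))

noncomputable def fiber (j : ℕ) (hj : j ≤ m) (v : Fin j → Fin d → ℝ) :
    Finset (Equiv.Perm (Fin m)) :=
  univ.filter (fun σ => proj y j hj σ = v)

lemma mem_fiber {j : ℕ} {hj : j ≤ m} {v : Fin j → Fin d → ℝ} {σ : Equiv.Perm (Fin m)} :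
    σ ∈ fiber y j hj v ↔ proj y j hj σ = v := by simp [fiber]

/-- swapping two tail positions preserves fibers -/
lemma fiber_swap {j : ℕ} {hj : j ≤ m} {v : Fin j → Fin d → ℝ} {p q : Fin m}
    (hp : j ≤ p.val) (hq : j ≤ q.val) (f : Fin m → ℝ) :
    ∑ σ ∈ fiber y j hj v, f (σ p) = ∑ σ ∈ fiber y j hj v, f (σ q) := by
  have hmem : ∀ σ, σ ∈ fiber y j hj v → σ * Equiv.swap p q ∈ fiber y j hj v := by
    intro σ hσ
    rw [mem_fiber] at hσ ⊢
    funext t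
    have hne1 : Fin.castLE hj t ≠ p := by
      intro hh
      have : (t : ℕ) < j := t.isLt
      rw [← hh] at hp; simp at hp; omega
    have hne2 : Fin.castLE hj t ≠ q := by
      intro hh
      have : (t : ℕ) < j := t.isLt
      rw [← hh] at hq; simp at hq; omega
    have : (σ * Equiv.swap p q) (Fin.castLE hj t) = σ (Fin.castLE hj t) := by
      rw [Equiv.Perm.mul_apply, Equiv.swap_apply_of_ne_of_ne hne1 hne2]
    calc proj y j hj (σ * Equiv.swap p q) t = y ((σ * Equiv.swap p q) (Fin.castLE hj t)) := rfl
      _ = y (σ (Fin.castLE hj t)) := by rw [this]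
      _ = v t := by rw [← hσ]; rfl
  refine Finset.sum_nbij' (fun σ => σ * Equiv.swap p q) (fun σ => σ * Equiv.swap p q) ?_ ?_ ?_ ?_ ?_
  · exact fun σ hσ => hmem σ hσ
  · exact fun σ hσ => hmem σ hσ
  · intro σ _
    show σ * Equiv.swap p q * Equiv.swap p q = σ
    rw [mul_assoc, Equiv.swap_mul_self, mul_one]
  · intro σ _
    show σ * Equiv.swap p q * Equiv.swap p q = σ
    rw [mul_assoc, Equiv.swap_mul_self, mul_one]
  · intro σ _
    show f (σ p) = f ((σ * Equiv.swap p q) q)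
    rw [Equiv.Perm.mul_apply, Equiv.swap_apply_right]

/-- on a fiber, the sum over head positions is determined -/
lemma fiber_head_sum {j : ℕ} {hj : j ≤ m} {v : Fin j → Fin d → ℝ} {σ : Equiv.Perm (Fin m)}
    (hσ : σ ∈ fiber y j hj v) :
    ∑ q ∈ tailP m j, y (σ q) i = (∑ t, y t i) - ∑ k : Fin j, v k i := by
  have htot : ∑ q : Fin m, y (σ q) i = ∑ t, y t i := Equiv.sum_comp σ (fun t => y t i)
  have hsplit := Finset.sum_filter_add_sum_filter_not (univ : Finset (Fin m))
    (fun p => j ≤ p.val) (fun q => y (σ q) i)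
  have hhead : ∑ q ∈ univ.filter (fun p : Fin m => ¬ j ≤ p.val), y (σ q) i
      = ∑ k : Fin j, v k i := by
    rw [mem_fiber] at hσ
    refine Finset.sum_bij'
      (i := fun (q : Fin m) (hq : q ∈ univ.filter (fun p : Fin m => ¬ j ≤ p.val)) =>
        (⟨q.val, not_le.1 (Finset.mem_filter.1 hq).2⟩ : Fin j))
      (j := fun (k : Fin j) _ => Fin.castLE hj k) ?_ ?_ ?_ ?_ ?_
    · intro q hq; exact Finset.mem_univ _
    · intro k _
      refine Finset.mem_filter.2 ⟨Finset.mem_univ _, ?_⟩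
      simp only [Fin.coe_castLE, not_le]
      exact k.isLt
    · intro q hq; exact Fin.ext rfl
    · intro k _; exact Fin.ext rfl
    · intro q hq
      have h1 := congrFun hσ ⟨q.val, not_le.1 (Finset.mem_filter.1 hq).2⟩
      have h2 : Fin.castLE hj (⟨q.val, not_le.1 (Finset.mem_filter.1 hq).2⟩ : Fin j) = q :=
        Fin.ext rfl
      rw [← h1]
      show y (σ q) i = y (σ (Fin.castLE hj _)) i
      rw [h2]
  have hT : tailP m j = univ.filter (fun p : Fin m => j ≤ p.val) := rfl
  rw [hT]
  linarith [hsplit, hhead, htot]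


lemma fiber_pos_sum {j : ℕ} (hj : j ≤ m) (v : Fin j → Fin d → ℝ) {p : Fin m}
    (hp : j ≤ p.val) :
    ∑ σ ∈ fiber y j hj v, y (σ p) i
      = (fiber y j hj v).card * (((∑ t, y t i) - ∑ k : Fin j, v k i) / ((m : ℝ) - j)) := by
  have hjm : j < m := lt_of_le_of_lt hp p.isLt
  have hmj : (0:ℝ) < (m:ℝ) - j := by
    have : (j:ℝ) < m := by exact_mod_cast hjm
    linarith
  have h2 : ∑ q ∈ tailP m j, (∑ σ ∈ fiber y j hj v, y (σ p) i)
      = ((m - j : ℕ) : ℝ) * ∑ σ ∈ fiber y j hj v, y (σ p) i := by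
    rw [Finset.sum_const, card_tailP, nsmul_eq_mul]
  have h3 : ∑ q ∈ tailP m j, (∑ σ ∈ fiber y j hj v, y (σ p) i)
      = ((fiber y j hj v).card : ℝ) * ((∑ t, y t i) - ∑ k : Fin j, v k i) := by
    calc ∑ q ∈ tailP m j, (∑ σ ∈ fiber y j hj v, y (σ p) i)
        = ∑ q ∈ tailP m j, (∑ σ ∈ fiber y j hj v, y (σ q) i) :=
          Finset.sum_congr rfl (fun q hq => (fiber_swap y (mem_tailP.1 hq) hp
            (fun t => y t i)).symm)
      _ = ∑ σ ∈ fiber y j hj v, ∑ q ∈ tailP m j, y (σ q) i := Finset.sum_comm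
      _ = ∑ σ ∈ fiber y j hj v, ((∑ t, y t i) - ∑ k : Fin j, v k i) :=
          Finset.sum_congr rfl (fun σ hσ => fiber_head_sum y i hσ)
      _ = _ := by rw [Finset.sum_const, nsmul_eq_mul]
  have hcast : ((m - j : ℕ) : ℝ) = (m:ℝ) - j := by
    rw [Nat.cast_sub hj]
  rw [hcast] at h2
  have key : ((m:ℝ) - j) * ∑ σ ∈ fiber y j hj v, y (σ p) i
      = ((fiber y j hj v).card : ℝ) * ((∑ t, y t i) - ∑ k : Fin j, v k i) := by
    rw [← h2]; exact h3
  rw [show ((fiber y j hj v).card : ℝ) * (((∑ t, y t i) - ∑ k : Fin j, v k i) / ((m : ℝ) - j))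
      = ((fiber y j hj v).card : ℝ) * ((∑ t, y t i) - ∑ k : Fin j, v k i) / ((m : ℝ) - j) from
      (mul_div_assoc _ _ _).symm, eq_div_iff (ne_of_gt hmj)]
  linarith [key]

lemma fiber_R_avg {j J : ℕ} (hj : j ≤ m) (hjJ : j ≤ J) (hJ : J < m)
    (v : Fin j → Fin d → ℝ) :
    ∑ σ ∈ fiber y j hj v, (∑ q ∈ tailP m J, y (σ q) i) / ((m : ℝ) - J)
      = (fiber y j hj v).card
          * (((∑ t, y t i) - ∑ k : Fin j, v k i) / ((m : ℝ) - j)) := by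
  have hmJ : (0:ℝ) < (m:ℝ) - J := by
    have : (J:ℝ) < m := by exact_mod_cast hJ
    linarith
  rw [← Finset.sum_div]
  have h1 : ∑ σ ∈ fiber y j hj v, ∑ q ∈ tailP m J, y (σ q) i
      = ∑ q ∈ tailP m J, ∑ σ ∈ fiber y j hj v, y (σ q) i := Finset.sum_comm
  have h2 : ∑ q ∈ tailP m J, ∑ σ ∈ fiber y j hj v, y (σ q) i
      = ((m - J : ℕ) : ℝ) * ((fiber y j hj v).card
          * (((∑ t, y t i) - ∑ k : Fin j, v k i) / ((m : ℝ) - j))) := by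
    rw [Finset.sum_congr rfl (fun q hq => fiber_pos_sum y i hj v
      (le_trans hjJ (mem_tailP.1 hq))), Finset.sum_const, card_tailP, nsmul_eq_mul]
  have hcast : ((m - J : ℕ) : ℝ) = (m:ℝ) - J := by
    rw [Nat.cast_sub hJ.le]
  rw [h1, h2, hcast, mul_div_cancel_left₀ _ (ne_of_gt hmJ)]


lemma tail_sum_eq_of_proj_eq {j k : ℕ} (hk : k ≤ j) (hj : j ≤ m)
    {σ σ' : Equiv.Perm (Fin m)}
    (hpp : proj y j hj σ = proj y j hj σ') :
    ∑ q ∈ tailP m k, y (σ q) i = ∑ q ∈ tailP m k, y (σ' q) i := by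
  have hkm : k ≤ m := hk.trans hj
  have h1 : σ ∈ fiber y k hkm (proj y k hkm σ) := by simp [fiber]
  have h2 : σ' ∈ fiber y k hkm (proj y k hkm σ') := by simp [fiber]
  rw [fiber_head_sum y i h1, fiber_head_sum y i h2]
  congr 1
  refine Finset.sum_congr rfl (fun k' _ => ?_)
  have hcongr := congrFun hpp (Fin.castLE hk k')
  have hcast : Fin.castLE hj (Fin.castLE hk k') = Fin.castLE hkm k' := Fin.ext rfl
  calc proj y k hkm σ k' i = y (σ (Fin.castLE hkm k')) i := rfl
    _ = y (σ (Fin.castLE hj (Fin.castLE hk k'))) i := by rw [hcast]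
    _ = y (σ' (Fin.castLE hj (Fin.castLE hk k'))) i := by
        have : proj y j hj σ (Fin.castLE hk k') = proj y j hj σ' (Fin.castLE hk k') := hcongr
        exact congrFun this i
    _ = y (σ' (Fin.castLE hkm k')) i := by rw [hcast]
    _ = proj y k hkm σ' k' i := rfl


variable [NeZero m]

lemma setIntegral_perm (S : Set (Equiv.Perm (Fin m))) (h : Equiv.Perm (Fin m) → ℝ) :
    ∫ x in S, h x ∂(permUniform m)
      = ((Fintype.card (Equiv.Perm (Fin m)) : ℝ))⁻¹
          * ∑ σ ∈ univ.filter (fun σ => σ ∈ S), h σ := by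
  classical
  rw [← integral_indicator (MeasurableSpace.measurableSet_top)]
  rw [integral_fintype]
  have : ∀ σ : Equiv.Perm (Fin m),
      (permUniform m).real {σ} • S.indicator h σ
        = ((Fintype.card (Equiv.Perm (Fin m)) : ℝ))⁻¹ * (if σ ∈ S then h σ else 0) := by
    intro σ
    rw [Measure.real, permUniform_singleton σ, Set.indicator_apply, smul_eq_mul]
    congr 1
    simp
  simp_rw [this]
  rw [← Finset.mul_sum, Finset.sum_filter]
  exact Integrable.of_finite

lemma condexp_eq_R (j : Fin m) :
    (permUniform m)[(fun σ' => y (σ' j) i)|MeasurableSpace.comap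
        (fun σ' : Equiv.Perm (Fin m) =>
          fun t : Fin (j : ℕ) => y (σ' (Fin.castLE j.isLt.le t)))
        inferInstance]
      = fun σ => (∑ q ∈ tailP m (j : ℕ), y (σ q) i) / ((m : ℝ) - (j : ℕ)) := by
  classical
  have hj : (j : ℕ) ≤ m := j.isLt.le
  set pr : Equiv.Perm (Fin m) → (Fin (j:ℕ) → Fin d → ℝ) := proj y (j:ℕ) hj with hpr
  have hproj_eq : (fun σ' : Equiv.Perm (Fin m) =>
      fun t : Fin (j : ℕ) => y (σ' (Fin.castLE j.isLt.le t))) = pr := rfl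
  rw [hproj_eq]
  set g : Equiv.Perm (Fin m) → ℝ :=
    fun σ => (∑ q ∈ tailP m (j : ℕ), y (σ q) i) / ((m : ℝ) - (j : ℕ)) with hg
  set f : Equiv.Perm (Fin m) → ℝ := fun σ' => y (σ' j) i with hf
  have hm : MeasurableSpace.comap pr inferInstance ≤
      (inferInstance : MeasurableSpace (Equiv.Perm (Fin m))) := le_top
  haveI : SigmaFinite ((permUniform m).trim hm) := by
    haveI := isFiniteMeasure_trim (μ := permUniform m) hm
    infer_instance
  have hgm : @Measurable _ _ (MeasurableSpace.comap pr inferInstance) _ g := by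
    have hpm : @Measurable _ _ (MeasurableSpace.comap pr inferInstance) _ pr :=
      Measurable.of_comap_le le_rfl
    have hH : Measurable (fun v : Fin (j:ℕ) → Fin d → ℝ =>
        ((∑ t, y t i) - ∑ k : Fin (j:ℕ), v k i) / ((m : ℝ) - (j : ℕ))) := by
      apply Measurable.div_const
      apply Measurable.sub measurable_const
      exact Finset.measurable_sum _ (fun k _ =>
        (measurable_pi_apply i).comp (measurable_pi_apply k))
    have hgeq : g = (fun v : Fin (j:ℕ) → Fin d → ℝ =>
        ((∑ t, y t i) - ∑ k : Fin (j:ℕ), v k i) / ((m : ℝ) - (j : ℕ))) ∘ pr := by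
      funext σ
      have hmem : σ ∈ fiber y (j:ℕ) hj (pr σ) := by
        simp [fiber, hpr]
      simp only [hg, Function.comp_apply]
      rw [fiber_head_sum y i hmem]
    rw [hgeq]
    exact hH.comp hpm
  have hae : g =ᵐ[permUniform m]
      (permUniform m)[f|MeasurableSpace.comap pr inferInstance] := by
    refine ae_eq_condExp_of_forall_setIntegral_eq hm (Integrable.of_finite)
      (fun s _ _ => Integrable.integrableOn (Integrable.of_finite))
      (fun s hs _ => ?_) (StronglyMeasurable.aestronglyMeasurable
        (Measurable.stronglyMeasurable hgm))
    rcases hs with ⟨B, hB, rfl⟩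
    rw [setIntegral_perm, setIntegral_perm]
    congr 1
    -- per fiber equality
    have hmaps : ∀ σ ∈ univ.filter (fun σ => σ ∈ pr ⁻¹' B),
        pr σ ∈ (univ.filter (fun σ => σ ∈ pr ⁻¹' B)).image pr :=
      fun σ hσ => Finset.mem_image_of_mem _ hσ
    rw [← Finset.sum_fiberwise_of_maps_to hmaps g,
        ← Finset.sum_fiberwise_of_maps_to hmaps f]
    refine Finset.sum_congr rfl (fun v hv => ?_)
    have hfib : (univ.filter (fun σ => σ ∈ pr ⁻¹' B)).filter (fun σ => pr σ = v)
        = fiber y (j:ℕ) hj v := by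
      rcases Finset.mem_image.1 hv with ⟨σ₀, hσ₀, rfl⟩
      have hσ₀B : pr σ₀ ∈ B := by
        simpa using (Finset.mem_filter.1 hσ₀).2
      ext σ
      simp only [Finset.mem_filter, Finset.mem_univ, true_and, fiber, Set.mem_preimage]
      constructor
      · rintro ⟨_, h2⟩; exact h2
      · intro h2
        refine ⟨?_, h2⟩
        show pr σ ∈ B
        rw [hpr] at h2 ⊢
        rw [h2]
        exact hσ₀B
    rw [hfib]
    have hR := fiber_R_avg y i hj (le_refl (j:ℕ)) j.isLt v
    have hF := fiber_pos_sum y i hj v (p := j) (le_refl (j:ℕ))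
    rw [hg, hf]
    rw [hR, hF]
  exact (eq_of_ae hae).symm


end S12

namespace Main
open S12
variable {m d : ℕ} (y : Fin m → Fin d → ℝ) (i : Fin d)

set_option maxHeartbeats 1000000 in
theorem bad_count (hm2 : 2 ≤ m)
    (hy : ∀ t i', y t i' ∈ Set.Icc (0:ℝ) 1) {ε δd : ℝ} (hε0 : 0 < ε) (hε1 : ε ≤ 1)
    (hδd0 : 0 < δd) (hδd1 : δd ≤ 1) :
    ((univ.filter (fun σ : Equiv.Perm (Fin m) =>
        ∃ j : Fin m, 2 * ((j:ℕ) + 1) ≤ m ∧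
          (1 + 2*ε) * ((1/(m:ℝ)) * ∑ t, y t i) + 2 * Real.log (1/δd) / (m*ε)
            < (∑ q ∈ tailP m (j:ℕ), y (σ q) i) / ((m:ℝ) - (j:ℕ)))).card : ℝ)
      ≤ δd * (Fintype.card (Equiv.Perm (Fin m))) := by
  classical
  have hm0 : 0 < m := by omega
  have hmR : (0:ℝ) < m := by exact_mod_cast hm0
  set S : ℝ := ∑ t, y t i with hS
  set μb : ℝ := (1/(m:ℝ)) * S with hμb
  set ℓ : ℝ := Real.log (1/δd) with hℓ
  set c : ℝ := 2 * ℓ / (m*ε) with hc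
  set a : ℝ := (1 + 2*ε) * μb + c with ha
  set R : ℕ → Equiv.Perm (Fin m) → ℝ :=
    fun jn σ => (∑ q ∈ tailP m jn, y (σ q) i) / ((m:ℝ) - jn) with hR
  have hS0 : 0 ≤ S := Finset.sum_nonneg fun t _ => (hy t i).1
  have hμb0 : 0 ≤ μb := by positivity
  have hℓ0 : 0 ≤ ℓ := Real.log_nonneg (by rw [le_div_iff₀ hδd0]; linarith)
  have hc0 : 0 ≤ c := by positivity
  -- J and K
  set hf : ℕ := m / 2 with hhf
  have hf1 : 1 ≤ hf := by omega
  set J : ℕ := hf - 1 with hJdef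
  set K : ℕ := m - J with hKdef
  have hJm : J < m := by omega
  have hJK : J + K = m := by omega
  have hK2 : m ≤ 2 * K := by omega
  have hK1 : 1 ≤ K := by omega
  have hKR : ((m:ℝ) - (J:ℕ)) = (K : ℝ) := by
    rw [hKdef, Nat.cast_sub hJm.le]
  have hKpos : (0:ℝ) < K := by exact_mod_cast hK1
  -- lambda
  set lam : ℝ := Real.log (1 + 2*ε) with hlam
  have hlampos : 0 < lam := Real.log_pos (by linarith)
  have hexplam : Real.exp lam = 1 + 2*ε := Real.exp_log (by linarith)
  have hlam_eps : ε ≤ lam := by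
    have e3 : Real.exp 1 ≤ 3 := by
      have := Real.exp_one_lt_d9; linarith
    have hconv : Real.exp ε ≤ 1 + 2*ε := by
      have h := convexOn_exp.2 (Set.mem_univ (0:ℝ)) (Set.mem_univ (1:ℝ))
        (by linarith : (0:ℝ) ≤ 1 - ε) (le_of_lt hε0) (by ring)
      simp only [smul_eq_mul, mul_zero, mul_one, zero_add, Real.exp_zero] at h
      nlinarith [Real.exp_pos (1:ℝ)]
    calc ε = Real.log (Real.exp ε) := (Real.log_exp ε).symm
      _ ≤ Real.log (1 + 2*ε) := Real.log_le_log (Real.exp_pos ε) hconv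
  have hlam2eps : 2*ε ≤ lam * (1 + 2*ε) := by
    have hpos : (0:ℝ) < 1 + 2*ε := by linarith
    have hlog := Real.log_le_sub_one_of_pos (show (0:ℝ) < (1+2*ε)⁻¹ by positivity)
    rw [Real.log_inv] at hlog
    have hfs : ((1+2*ε)⁻¹ - 1) * (1+2*ε) = -(2*ε) := by field_simp; ring
    nlinarith [mul_le_mul_of_nonneg_right hlog hpos.le]
  set θ : ℝ := lam * K with hθ
  have hθ0 : 0 ≤ θ := by positivity
  set a' : Fin m → ℝ := fun t => Real.exp (lam * y t i) with ha'
  have ha'0 : ∀ u, 0 ≤ a' u := fun u => (Real.exp_pos _).le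
  -- Step 1 : pointwise identity
  have step1 : ∀ σ : Equiv.Perm (Fin m),
      Real.exp (θ * R J σ) = ∏ p ∈ tailP m J, a' (σ p) := by
    intro σ
    have h1 : θ * R J σ = lam * ∑ q ∈ tailP m J, y (σ q) i := by
      rw [hθ, hR]
      simp only []
      rw [hKR]
      field_simp
    rw [h1, Finset.mul_sum, Real.exp_sum]
  -- Step 3 : mgf bound
  have step3 : (∑ u, a' u) / m ≤ Real.exp (2*ε*μb) := by
    have hperc : ∀ u : Fin m, a' u ≤ 1 + 2*ε * y u i := by
      intro u
      have hyu := hy u i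
      have h := convexOn_exp.2 (Set.mem_univ (0:ℝ)) (Set.mem_univ lam)
        (by linarith [hyu.2] : (0:ℝ) ≤ 1 - y u i) hyu.1 (by ring)
      simp only [smul_eq_mul, mul_zero, zero_add, Real.exp_zero] at h
      rw [mul_comm (y u i) lam] at h
      rw [ha']
      simp only []
      nlinarith [hexplam, hyu.1, hyu.2]
    have hsum : (∑ u, a' u) ≤ m + 2*ε*S := by
      calc (∑ u, a' u) ≤ ∑ u, (1 + 2*ε * y u i) := Finset.sum_le_sum fun u _ => hperc u
        _ = m + 2*ε*S := by
            rw [Finset.sum_add_distrib, Finset.sum_const, card_univ, Fintype.card_fin,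
              nsmul_eq_mul, mul_one, ← Finset.mul_sum, ← hS]
    have h1 : (∑ u, a' u) / m ≤ 1 + 2*ε*μb := by
      rw [div_le_iff₀ hmR]
      have hid : (1 + 2*ε*μb) * m = m + 2*ε*S := by
        rw [hμb]; field_simp
      linarith [hsum, hid]
    calc (∑ u, a' u) / m ≤ 1 + 2*ε*μb := h1
      _ ≤ Real.exp (2*ε*μb) := by
          have := Real.add_one_le_exp (2*ε*μb); linarith
  -- Step 2 : product bound
  have step2 : ∑ σ : Equiv.Perm (Fin m), Real.exp (θ * R J σ)
      ≤ Real.exp (2*ε*μb*K) * (Fintype.card (Equiv.Perm (Fin m)) : ℝ) := by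
    have h2 := tail_prod_le a' hm0 ha'0 K J hJK
    have h3 : ((∑ u, a' u) / m) ^ K ≤ Real.exp (2*ε*μb) ^ K := by
      apply pow_le_pow_left₀ (by positivity) step3
    calc ∑ σ : Equiv.Perm (Fin m), Real.exp (θ * R J σ)
        = ∑ σ : Equiv.Perm (Fin m), ∏ p ∈ tailP m J, a' (σ p) :=
          Finset.sum_congr rfl fun σ _ => step1 σ
      _ ≤ ((∑ u, a' u) / m) ^ K * (Fintype.card (Equiv.Perm (Fin m)) : ℝ) := h2
      _ ≤ Real.exp (2*ε*μb) ^ K * (Fintype.card (Equiv.Perm (Fin m)) : ℝ) := by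
          apply mul_le_mul_of_nonneg_right h3 (by positivity)
      _ = Real.exp (2*ε*μb*K) * (Fintype.card (Equiv.Perm (Fin m)) : ℝ) := by
          rw [← Real.exp_nat_mul]
          ring_nf
  -- Step 4 : stopping-time decomposition
  have hN0 : (0:ℝ) < (Fintype.card (Equiv.Perm (Fin m)) : ℝ) := by
    have : 0 < Fintype.card (Equiv.Perm (Fin m)) := Fintype.card_pos
    exact_mod_cast this
  set Bad := univ.filter (fun σ : Equiv.Perm (Fin m) =>
    ∃ j : Fin m, 2 * ((j:ℕ) + 1) ≤ m ∧ a < R (j:ℕ) σ) with hBad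
  set Bt : ℕ → Finset (Equiv.Perm (Fin m)) :=
    fun jn => univ.filter (fun σ => a < R jn σ ∧ ∀ k < jn, R k σ ≤ a) with hBt
  have hsub : Bad ⊆ (Finset.range hf).biUnion Bt := by
    intro σ hσ
    obtain ⟨j, hjv, hjR⟩ := (Finset.mem_filter.1 hσ).2
    have hex : ∃ n, n < hf ∧ a < R n σ := ⟨(j:ℕ), by omega, hjR⟩
    obtain ⟨hn1, hn2⟩ := Nat.find_spec hex
    refine Finset.mem_biUnion.2 ⟨Nat.find hex, Finset.mem_range.2 hn1, ?_⟩
    refine Finset.mem_filter.2 ⟨Finset.mem_univ _, hn2, fun k hk => ?_⟩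
    have hmin := Nat.find_min hex hk
    push_neg at hmin
    exact hmin (lt_trans hk hn1)
  have hdisj : (↑(Finset.range hf) : Set ℕ).PairwiseDisjoint Bt := by
    intro j1 _ j2 _ hne
    refine Finset.disjoint_left.2 (fun σ h1 h2 => ?_)
    rcases Finset.mem_filter.1 h1 with ⟨_, hR1, hmin1⟩
    rcases Finset.mem_filter.1 h2 with ⟨_, hR2, hmin2⟩
    rcases lt_or_gt_of_ne hne with h | h
    · exact absurd hR1 (not_lt.2 (hmin2 j1 h))
    · exact absurd hR2 (not_lt.2 (hmin1 j2 h))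
  have key : ∀ jn, jn < hf → ((Bt jn).card : ℝ) * Real.exp (θ * a)
      ≤ ∑ σ ∈ Bt jn, Real.exp (θ * R J σ) := by
    intro jn hjn
    have hjnm : jn ≤ m := by omega
    have hjnJ : jn ≤ J := by omega
    have hmaps : ∀ σ ∈ Bt jn, proj y jn hjnm σ ∈ (Bt jn).image (proj y jn hjnm) :=
      fun σ hσ => Finset.mem_image_of_mem _ hσ
    have hcardfib := Finset.card_eq_sum_card_fiberwise hmaps
    have hsumfib := Finset.sum_fiberwise_of_maps_to hmaps
      (fun σ => Real.exp (θ * R J σ))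
    have hfib : ∀ v ∈ (Bt jn).image (proj y jn hjnm),
        ((Bt jn).filter (fun σ => proj y jn hjnm σ = v) = fiber y jn hjnm v) ∧
        ∃ σ₀, σ₀ ∈ fiber y jn hjnm v ∧ a < R jn σ₀ := by
      intro v hv
      obtain ⟨σ₀, hσ₀Bt, hσ₀v⟩ := Finset.mem_image.1 hv
      rcases Finset.mem_filter.1 hσ₀Bt with ⟨_, hRσ₀, hminσ₀⟩
      have hmemf : σ₀ ∈ fiber y jn hjnm v := by
        simp only [fiber, Finset.mem_filter, Finset.mem_univ, true_and]
        exact hσ₀v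
      constructor
      · ext σ
        simp only [Finset.mem_filter, fiber, Finset.mem_univ, true_and]
        constructor
        · rintro ⟨_, h⟩; exact h
        · intro hproj
          have hRsame : ∀ k, k ≤ jn → R k σ = R k σ₀ := by
            intro k hk
            rw [hR]
            simp only []
            rw [tail_sum_eq_of_proj_eq y i hk hjnm (hproj.trans hσ₀v.symm)]
          refine ⟨Finset.mem_filter.2 ⟨Finset.mem_univ _, ?_, ?_⟩, hproj⟩
          · rw [hRsame jn le_rfl]; exact hRσ₀
          · intro k hk; rw [hRsame k hk.le]; exact hminσ₀ k hk
      · exact ⟨σ₀, hmemf, hRσ₀⟩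
    have hperfiber : ∀ v ∈ (Bt jn).image (proj y jn hjnm),
        ((fiber y jn hjnm v).card : ℝ) * Real.exp (θ * a)
          ≤ ∑ σ ∈ fiber y jn hjnm v, Real.exp (θ * R J σ) := by
      intro v hv
      obtain ⟨_, σ₀, hσ₀f, hσ₀R⟩ := hfib v hv
      have hne : (fiber y jn hjnm v).Nonempty := ⟨σ₀, hσ₀f⟩
      have hcard0 : (0:ℝ) < (fiber y jn hjnm v).card := by
        exact_mod_cast Finset.card_pos.2 hne
      have havg : (∑ σ ∈ fiber y jn hjnm v, θ * R J σ) / (fiber y jn hjnm v).card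
          = θ * R jn σ₀ := by
        rw [← Finset.mul_sum]
        have h1 : ∑ σ ∈ fiber y jn hjnm v, R J σ
            = (fiber y jn hjnm v).card
                * (((∑ t, y t i) - ∑ k : Fin jn, v k i) / ((m:ℝ) - jn)) := by
          rw [hR]; exact fiber_R_avg y i hjnm hjnJ hJm v
        have h2 : R jn σ₀ = ((∑ t, y t i) - ∑ k : Fin jn, v k i) / ((m:ℝ) - jn) := by
          rw [hR]
          simp only []
          rw [fiber_head_sum y i hσ₀f]
        have hF : ((fiber y jn hjnm v).card : ℝ) ≠ 0 := ne_of_gt hcard0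
        have hmjn : (m:ℝ) - (jn:ℝ) ≠ 0 := by
          have : (jn:ℝ) < m := by exact_mod_cast lt_of_le_of_lt hjnJ hJm
          intro hh; linarith
        rw [h1, h2]
        field_simp
      calc ((fiber y jn hjnm v).card : ℝ) * Real.exp (θ * a)
          ≤ ((fiber y jn hjnm v).card : ℝ) * Real.exp (θ * R jn σ₀) := by
            apply mul_le_mul_of_nonneg_left _ hcard0.le
            exact Real.exp_le_exp.2 (mul_le_mul_of_nonneg_left hσ₀R.le hθ0)
        _ = ((fiber y jn hjnm v).card : ℝ)
              * Real.exp ((∑ σ ∈ fiber y jn hjnm v, θ * R J σ)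
                  / (fiber y jn hjnm v).card) := by rw [havg]
        _ ≤ ∑ σ ∈ fiber y jn hjnm v, Real.exp (θ * R J σ) :=
            card_mul_exp_avg_le _ hne _
    calc ((Bt jn).card : ℝ) * Real.exp (θ * a)
        = ∑ v ∈ (Bt jn).image (proj y jn hjnm),
            (((Bt jn).filter (fun σ => proj y jn hjnm σ = v)).card : ℝ)
              * Real.exp (θ * a) := by
          rw [← Finset.sum_mul]
          congr 1
          rw [hcardfib]
          push_cast
          rfl
      _ ≤ ∑ v ∈ (Bt jn).image (proj y jn hjnm),
            ∑ σ ∈ (Bt jn).filter (fun σ => proj y jn hjnm σ = v),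
              Real.exp (θ * R J σ) := by
          refine Finset.sum_le_sum (fun v hv => ?_)
          rw [(hfib v hv).1]
          exact hperfiber v hv
      _ = ∑ σ ∈ Bt jn, Real.exp (θ * R J σ) := hsumfib
  have step4 : ((Bad).card : ℝ) * Real.exp (θ * a)
      ≤ ∑ σ : Equiv.Perm (Fin m), Real.exp (θ * R J σ) := by
    have h1 : ((Bad).card : ℝ) ≤ ∑ jn ∈ Finset.range hf, ((Bt jn).card : ℝ) := by
      exact_mod_cast (Finset.card_le_card hsub).trans Finset.card_biUnion_le
    have h2 : ((Bad).card : ℝ) * Real.exp (θ * a)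
        ≤ ∑ jn ∈ Finset.range hf, ((Bt jn).card : ℝ) * Real.exp (θ * a) := by
      rw [← Finset.sum_mul]
      exact mul_le_mul_of_nonneg_right h1 (Real.exp_pos _).le
    have h3 : ∑ jn ∈ Finset.range hf, ∑ σ ∈ Bt jn, Real.exp (θ * R J σ)
        = ∑ σ ∈ (Finset.range hf).biUnion Bt, Real.exp (θ * R J σ) :=
      (Finset.sum_biUnion hdisj).symm
    have h4 : ∑ σ ∈ (Finset.range hf).biUnion Bt, Real.exp (θ * R J σ)
        ≤ ∑ σ : Equiv.Perm (Fin m), Real.exp (θ * R J σ) :=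
      Finset.sum_le_sum_of_subset_of_nonneg (Finset.subset_univ _)
        (fun σ _ _ => (Real.exp_pos _).le)
    calc ((Bad).card : ℝ) * Real.exp (θ * a)
        ≤ ∑ jn ∈ Finset.range hf, ((Bt jn).card : ℝ) * Real.exp (θ * a) := h2
      _ ≤ ∑ jn ∈ Finset.range hf, ∑ σ ∈ Bt jn, Real.exp (θ * R J σ) :=
          Finset.sum_le_sum (fun jn hjn => key jn (Finset.mem_range.1 hjn))
      _ = ∑ σ ∈ (Finset.range hf).biUnion Bt, Real.exp (θ * R J σ) := h3
      _ ≤ _ := h4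
  -- Step 5 : final numeric computation
  have hexpo : 2*ε*μb*(K:ℝ) - θ*a ≤ -ℓ := by
    have ht1 : θ*a = lam*(1+2*ε)*μb*(K:ℝ) + lam*(K:ℝ)*c := by
      rw [hθ, ha]; ring
    have ht2 : ε*(K:ℝ)*c ≤ lam*(K:ℝ)*c :=
      mul_le_mul_of_nonneg_right (mul_le_mul_of_nonneg_right hlam_eps hKpos.le) hc0
    have ht3 : ε*(K:ℝ)*c = 2*(K:ℝ)*ℓ/m := by
      rw [hc]
      field_simp
    have ht4 : ℓ ≤ 2*(K:ℝ)*ℓ/m := by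
      rw [le_div_iff₀ hmR]
      have hm2K : (m:ℝ) ≤ 2*(K:ℝ) := by exact_mod_cast hK2
      have := mul_le_mul_of_nonneg_right hm2K hℓ0
      linarith
    have hμbK : (0:ℝ) ≤ μb * (K:ℝ) := mul_nonneg hμb0 hKpos.le
    have ht5 : 2*ε*(μb*(K:ℝ)) ≤ lam*(1+2*ε)*(μb*(K:ℝ)) :=
      mul_le_mul_of_nonneg_right hlam2eps hμbK
    linarith [ht1, ht2, ht3, ht4, ht5]
  have hfinal : ((Bad).card : ℝ)
      ≤ δd * (Fintype.card (Equiv.Perm (Fin m)) : ℝ) := by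
    have hEa : (0:ℝ) < Real.exp (θ * a) := Real.exp_pos _
    have h5 : ((Bad).card : ℝ)
        ≤ Real.exp (2*ε*μb*(K:ℝ) - θ*a) * (Fintype.card (Equiv.Perm (Fin m)) : ℝ) := by
      rw [Real.exp_sub, div_mul_eq_mul_div, le_div_iff₀ hEa]
      calc ((Bad).card : ℝ) * Real.exp (θ * a)
          ≤ ∑ σ : Equiv.Perm (Fin m), Real.exp (θ * R J σ) := step4
        _ ≤ Real.exp (2*ε*μb*(K:ℝ)) * (Fintype.card (Equiv.Perm (Fin m)) : ℝ) := step2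
    have h6 : Real.exp (2*ε*μb*(K:ℝ) - θ*a) ≤ δd := by
      calc Real.exp (2*ε*μb*(K:ℝ) - θ*a) ≤ Real.exp (-ℓ) := Real.exp_le_exp.2 hexpo
        _ = δd := by
            rw [Real.exp_neg, hℓ, Real.exp_log (by positivity), one_div, inv_inv]
    calc ((Bad).card : ℝ)
        ≤ Real.exp (2*ε*μb*(K:ℝ) - θ*a) * (Fintype.card (Equiv.Perm (Fin m)) : ℝ) := h5
      _ ≤ δd * (Fintype.card (Equiv.Perm (Fin m)) : ℝ) :=
          mul_le_mul_of_nonneg_right h6 hN0.le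
  exact hfinal

end Main

/-- For vectors `y₁,…,y_m ∈ [0,1]^d` presented in uniformly random order
(`Y_j := y_{σ(j)}`, 0-indexed) and a fixed coordinate `i`, with probability at least
`1 − δ/d` one has, simultaneously for all `j` with `j+1 ≤ m/2` (1-indexed `j ≤ m/2`):
`E[Y_j,i | Y_0,…,Y_{j−1}] ≤ (1+2ε)·μ_i + C·log(d/δ)/(m·ε)`. -/
theorem condexp_remaining_average_bound :
    ∃ C : ℝ, 0 < C ∧
      ∀ (m d : ℕ), 0 < m → 0 < d →
      ∀ (y : Fin m → Fin d → ℝ), (∀ t i', y t i' ∈ Set.Icc (0 : ℝ) 1) →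
      ∀ (i : Fin d) (ε δ : ℝ), ε ∈ Set.Ioc (0 : ℝ) 1 → δ ∈ Set.Ioc (0 : ℝ) 1 →
      ENNReal.ofReal (1 - δ / d) ≤
        permUniform m {σ | ∀ j : Fin m, 2 * ((j : ℕ) + 1) ≤ m →
          ((permUniform m)[(fun σ' => y (σ' j) i)|MeasurableSpace.comap
              (fun σ' : Equiv.Perm (Fin m) =>
                fun t : Fin (j : ℕ) => y (σ' (Fin.castLE j.isLt.le t)))
              inferInstance]) σ
            ≤ (1 + 2 * ε) * ((1 / m) * ∑ t, y t i) + C * Real.log (d / δ) / (m * ε)} := by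
  classical
  refine ⟨2, by norm_num, ?_⟩
  intro m d hm hd y hy i ε δ hε hδ
  haveI : NeZero m := ⟨hm.ne'⟩
  have hdR : (0:ℝ) < d := by exact_mod_cast hd
  have hδd0 : 0 < δ/(d:ℝ) := div_pos hδ.1 hdR
  have hδd1 : δ/(d:ℝ) ≤ 1 := by
    rw [div_le_one hdR]
    have h1 : (1:ℝ) ≤ d := by exact_mod_cast hd
    linarith [hδ.2]
  have hce : ∀ j : Fin m, ((permUniform m)[(fun σ' => y (σ' j) i)|MeasurableSpace.comap
      (fun σ' : Equiv.Perm (Fin m) =>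
        fun t : Fin (j : ℕ) => y (σ' (Fin.castLE j.isLt.le t)))
      inferInstance])
      = fun σ => (∑ q ∈ S12.tailP m (j : ℕ), y (σ q) i) / ((m : ℝ) - (j : ℕ)) :=
    fun j => S12.condexp_eq_R y i j
  simp only [hce]
  set G : Set (Equiv.Perm (Fin m)) := {σ | ∀ j : Fin m, 2 * ((j:ℕ) + 1) ≤ m →
    (∑ q ∈ S12.tailP m (j:ℕ), y (σ q) i) / ((m:ℝ) - (j:ℕ))
      ≤ (1 + 2*ε) * ((1/(m:ℝ)) * ∑ t, y t i) + 2 * Real.log ((d:ℝ)/δ) / (m*ε)} with hG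
  by_cases hm2 : 2 ≤ m
  · -- main case
    have hcount := Main.bad_count y i hm2 hy hε.1 hε.2 hδd0 hδd1
    rw [show (1:ℝ)/(δ/(d:ℝ)) = (d:ℝ)/δ from one_div_div _ _] at hcount
    set BadF : Finset (Equiv.Perm (Fin m)) := univ.filter (fun σ =>
      ∃ j : Fin m, 2 * ((j:ℕ) + 1) ≤ m ∧
        (1 + 2*ε) * ((1/(m:ℝ)) * ∑ t, y t i) + 2 * Real.log ((d:ℝ)/δ) / (m*ε)
          < (∑ q ∈ S12.tailP m (j:ℕ), y (σ q) i) / ((m:ℝ) - (j:ℕ))) with hBadF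
    have hGc : Gᶜ = ↑BadF := by
      ext σ
      simp only [hG, hBadF, Set.mem_compl_iff, Set.mem_setOf_eq, Finset.coe_filter,
        Finset.mem_univ, true_and, Set.mem_setOf_eq]
      push_neg
      rfl
    -- measure of bad set
    have hNne0 : ((Fintype.card (Equiv.Perm (Fin m)) : ENNReal)) ≠ 0 := by
      simp [Fintype.card_ne_zero]
    have hNnetop : ((Fintype.card (Equiv.Perm (Fin m)) : ENNReal)) ≠ ⊤ :=
      ENNReal.natCast_ne_top _
    have hbad : permUniform m Gᶜ ≤ ENNReal.ofReal (δ/(d:ℝ)) := by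
      rw [hGc, S12.permUniform_finset]
      have h2 : (BadF.card : ENNReal)
          ≤ ENNReal.ofReal (δ/(d:ℝ)) * (Fintype.card (Equiv.Perm (Fin m)) : ENNReal) := by
        rw [← ENNReal.ofReal_natCast BadF.card,
          ← ENNReal.ofReal_natCast (Fintype.card (Equiv.Perm (Fin m))),
          ← ENNReal.ofReal_mul hδd0.le]
        exact ENNReal.ofReal_le_ofReal hcount
      calc (BadF.card : ENNReal) * (Fintype.card (Equiv.Perm (Fin m)) : ENNReal)⁻¹
          ≤ (ENNReal.ofReal (δ/(d:ℝ)) * (Fintype.card (Equiv.Perm (Fin m)) : ENNReal))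
              * (Fintype.card (Equiv.Perm (Fin m)) : ENNReal)⁻¹ :=
            mul_le_mul_of_nonneg_right h2 (by positivity)
        _ = ENNReal.ofReal (δ/(d:ℝ)) := by
            rw [mul_assoc, ENNReal.mul_inv_cancel hNne0 hNnetop, mul_one]
    have hGmeas : MeasurableSet Gᶜ := MeasurableSpace.measurableSet_top
    have hcompl : permUniform m G = 1 - permUniform m Gᶜ := by
      have h := prob_compl_eq_one_sub (μ := permUniform m) (s := Gᶜ)
        MeasurableSpace.measurableSet_top
      rw [compl_compl] at h
      exact h
    rw [hcompl]
    have hofreal : ENNReal.ofReal (1 - δ/(d:ℝ))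
        = 1 - ENNReal.ofReal (δ/(d:ℝ)) := by
      rw [ENNReal.ofReal_sub _ hδd0.le, ENNReal.ofReal_one]
    rw [hofreal]
    exact tsub_le_tsub_left hbad 1
  · -- m = 1
    have hGuniv : G = Set.univ := by
      ext σ
      simp only [hG, Set.mem_setOf_eq, Set.mem_univ, iff_true]
      intro j hj
      exfalso
      omega
    rw [hGuniv, measure_univ]
    exact ENNReal.ofReal_le_one.2 (by linarith [hδd0])
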